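/- Let m ≥ n ≥ 1 and A ∈ ℝ^{m×n}. Assume (i) for every subset S of row indices with |S| = n, the rows of A indexed by S are linearly independent, and (ii) for every x ∈ ℝ^n with ‖x‖₂ = 1 the vector Ax has at least n strictly positive entries. Then the ReLU layer map f_A : ℝ^n → ℝ^m defined componentwise by f_A(x)_i = max((Ax)_i, 0) is injective. -/

import Mathlib

/-- The ReLU layer map `x ↦ max (A x) 0` (componentwise). -/
noncomputable def reluLayer {m n : ℕ} (A : Matrix (Fin m) (Fin n) ℝ)
    (x : EuclideanSpace ℝ (Fin n)) : Fin m → ℝ :=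
  fun i => max (A.mulVec x i) 0

/-- If every `n` rows of `A` are linearly independent, and for every unit vector `x`
the vector `A x` has at least `n` strictly positive entries, then the ReLU layer map
is injective. -/
theorem relu_layer_injective (m n : ℕ) (hn : 1 ≤ n) (hmn : n ≤ m)
    (A : Matrix (Fin m) (Fin n) ℝ)
    (hrows : ∀ S : Finset (Fin m), S.card = n →
      LinearIndependent ℝ (fun i : S => A i))
    (hpos : ∀ x : EuclideanSpace ℝ (Fin n), ‖x‖ = 1 →
      n ≤ {i | 0 < A.mulVec x i}.ncard) :
    Function.Injective (reluLayer A) := by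
  intro x y hxy
  by_contra hne
  have hxy' : ∀ i, max (A.mulVec x i) 0 = max (A.mulVec y i) 0 := fun i =>
    congrFun hxy i
  -- First, x ≠ 0
  have key : ∀ u v : EuclideanSpace ℝ (Fin n),
      (∀ i, max (A.mulVec u i) 0 = max (A.mulVec v i) 0) → u ≠ v → u ≠ 0 := by
    intro u v h huv hu0
    have hv0 : v ≠ 0 := fun h0 => huv (hu0.trans h0.symm)
    have hvle : ∀ i, A.mulVec v i ≤ 0 := by
      intro i
      have := h i
      rw [hu0] at this
      have h0 : A.mulVec (0 : EuclideanSpace ℝ (Fin n)) i = 0 := by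
        show A.mulVec (0 : Fin n → ℝ) i = 0
        simp
      rw [h0, max_self] at this
      by_contra hlt
      push_neg at hlt
      rw [max_eq_left hlt.le] at this
      exact hlt.ne' this.symm
    have hnorm : ‖(‖v‖⁻¹ : ℝ) • v‖ = 1 := norm_smul_inv_norm hv0
    have hcard := hpos _ hnorm
    have hne' : {i | 0 < A.mulVec ((‖v‖⁻¹ : ℝ) • v) i}.Nonempty := by
      rw [← Set.ncard_pos (Set.toFinite _)]
      exact lt_of_lt_of_le hn hcard
    obtain ⟨i, hi⟩ := hne'
    have hsmul : A.mulVec ((‖v‖⁻¹ : ℝ) • v) i = ‖v‖⁻¹ * A.mulVec v i := by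
      have : ((‖v‖⁻¹ : ℝ) • v : EuclideanSpace ℝ (Fin n))
          = (‖v‖⁻¹ : ℝ) • (v : Fin n → ℝ) := rfl
      rw [Matrix.mulVec_smul]
      rfl
    rw [Set.mem_setOf_eq, hsmul] at hi
    have : 0 < A.mulVec v i := by
      have hvpos : (0:ℝ) < ‖v‖⁻¹ := by
        have : (0:ℝ) < ‖v‖ := norm_pos_iff.mpr hv0
        positivity
      nlinarith
    exact absurd (hvle i) (not_le.mpr this)
  have hx0 : x ≠ 0 := key x y hxy' hne
  -- positivity set of x
  have hnorm : ‖(‖x‖⁻¹ : ℝ) • x‖ = 1 := norm_smul_inv_norm hx0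
  have hcard := hpos _ hnorm
  have hsetEq : {i | 0 < A.mulVec ((‖x‖⁻¹ : ℝ) • x) i} = {i | 0 < A.mulVec x i} := by
    ext i
    have hsmul : A.mulVec ((‖x‖⁻¹ : ℝ) • x) i = ‖x‖⁻¹ * A.mulVec x i := by
      have : ((‖x‖⁻¹ : ℝ) • x : EuclideanSpace ℝ (Fin n))
          = (‖x‖⁻¹ : ℝ) • (x : Fin n → ℝ) := rfl
      rw [Matrix.mulVec_smul]
      rfl
    have hvpos : (0:ℝ) < ‖x‖⁻¹ := by
      have : (0:ℝ) < ‖x‖ := norm_pos_iff.mpr hx0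
      positivity
    simp only [Set.mem_setOf_eq, hsmul]
    constructor
    · intro h; nlinarith
    · intro h; positivity
  have hcard : n ≤ {i | 0 < A.mulVec x i}.ncard := by rw [← hsetEq]; exact hcard
  have hfin : {i | 0 < A.mulVec x i}.Finite := Set.toFinite _
  have hcard' : n ≤ hfin.toFinset.card := by
    rwa [Set.ncard_eq_toFinset_card _ hfin] at hcard
  obtain ⟨T, hTsub, hTcard⟩ := Finset.exists_subset_card_eq hcard'
  have hli := hrows T hTcard
  -- On T, A.mulVec x i = A.mulVec y i
  set z : Fin n → ℝ := (x : Fin n → ℝ) - (y : Fin n → ℝ) with hz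
  have hz0 : z ≠ 0 := by
    intro h
    apply hne
    have := sub_eq_zero.mp h
    refine PiLp.ext (fun i => ?_)
    exact congrFun this i
  have hTzero : ∀ i ∈ T, dotProduct (A i) z = 0 := by
    intro i hiT
    have hpos_i : 0 < A.mulVec x i := by
      have := hTsub hiT
      rwa [Set.Finite.mem_toFinset] at this
    have heq := hxy' i
    rw [max_eq_left hpos_i.le] at heq
    have hy_eq : A.mulVec y i = A.mulVec x i := by
      rcases le_or_gt (A.mulVec y i) 0 with h | h
      · rw [max_eq_right h] at heq
        exact absurd heq.symm hpos_i.ne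
      · rw [max_eq_left h.le] at heq
        exact heq.symm
    have : dotProduct (A i) z = A.mulVec x i - A.mulVec y i := by
      simp [hz, dotProduct, Matrix.mulVec, Pi.sub_apply, mul_sub,
        Finset.sum_sub_distrib]
    rw [this, hy_eq, sub_self]
  -- rows of T span ℝ^n
  have hTne : Nonempty T := by
    rw [Finset.nonempty_coe_sort, ← Finset.card_pos, hTcard]; omega
  have hspan : Submodule.span ℝ (Set.range (fun i : T => A i)) = ⊤ := by
    apply hli.span_eq_top_of_card_eq_finrank
    rw [Fintype.card_coe, hTcard]
    simp
  have hall : ∀ w : Fin n → ℝ, dotProduct w z = 0 := by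
    intro w
    have hw : w ∈ Submodule.span ℝ (Set.range (fun i : T => A i)) := by
      rw [hspan]; trivial
    induction hw using Submodule.span_induction with
    | mem w hw =>
        obtain ⟨i, rfl⟩ := hw
        exact hTzero i i.2
    | zero => exact zero_dotProduct z
    | add u v _ _ hu hv => rw [add_dotProduct, hu, hv, add_zero]
    | smul c u _ hu => rw [smul_dotProduct, hu, smul_zero]
  have := hall z
  rw [dotProduct_self_eq_zero] at this
  exact hz0 this
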